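/- (Negativity of the untilted Euler-factor covariance: φ(0) < 0 in the fixed-p barrier argument.) For every t ∈ (0,1), under the untilted semicircle weight the covariance of log h_t(x) and x² is strictly negative: Cov^t_0(log h_t, x²) = E^t_0[Real.log(h_t(x))·x²] − E^t_0[Real.log(h_t(x))]·E^t_0[x²] < 0, where h_t(x) = 1 − 2·t·x + t². -/

import Mathlib

open intervalIntegral

/-- The Euler-factor polynomial `h_t(x) = 1 − 2tx + t²`. -/
noncomputable def eulerH (t x : ℝ) : ℝ := 1 - 2 * t * x + t ^ 2

/-- The Euler-factor tilted weight `u_{t,λ}(x) = √(1 − x²)·h_t(x)^{−λ}` on `[-1,1]`. -/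
noncomputable def eulerW (t lam x : ℝ) : ℝ := Real.sqrt (1 - x ^ 2) * eulerH t x ^ (-lam)

/-- The normalization constant `Z_t(λ)`. -/
noncomputable def eulerZ (t lam : ℝ) : ℝ := ∫ x in (-1 : ℝ)..1, eulerW t lam x

/-- The mean `E^t_λ[f]` under the Euler-factor tilted semicircle measure. -/
noncomputable def eulerE (t lam : ℝ) (f : ℝ → ℝ) : ℝ :=
  (eulerZ t lam)⁻¹ * ∫ x in (-1 : ℝ)..1, f x * eulerW t lam x

/-- The covariance `Cov^t_λ(f, g)` under the Euler-factor tilted semicircle measure. -/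
noncomputable def eulerCov (t lam : ℝ) (f g : ℝ → ℝ) : ℝ :=
  eulerE t lam (fun x => f x * g x) - eulerE t lam f * eulerE t lam g

namespace EulerAux

open MeasureTheory Set Real

/-- semicircle weight -/
noncomputable def w (x : ℝ) : ℝ := Real.sqrt (1 - x ^ 2)

/-- even part of `log ∘ eulerH t` -/
noncomputable def F (t x : ℝ) : ℝ := (Real.log (eulerH t x) + Real.log (eulerH t (-x))) / 2

lemma w_nonneg (x : ℝ) : 0 ≤ w x := Real.sqrt_nonneg _

lemma eulerW_zero (t x : ℝ) : eulerW t 0 x = w x := by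
  simp [eulerW, w]

lemma w_eq_zero {x : ℝ} (hx : 1 ≤ |x|) : w x = 0 := by
  have : 1 ≤ x ^ 2 := by
    have := sq_abs x; nlinarith [sq_abs x, abs_nonneg x]
  have : 1 - x ^ 2 ≤ 0 := by linarith
  exact Real.sqrt_eq_zero_of_nonpos this

lemma w_pos {x : ℝ} (hx : |x| < 1) : 0 < w x := by
  apply Real.sqrt_pos.mpr
  nlinarith [sq_abs x, abs_nonneg x]

section T
variable {t : ℝ} (ht0 : 0 < t) (ht1 : t < 1)
include ht0 ht1

lemma hpos {x : ℝ} (hx : x ≤ 1) : 0 < eulerH t x := by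
  unfold eulerH
  nlinarith [mul_le_mul_of_nonneg_left hx ht0.le, mul_pos (sub_pos.mpr ht1) (sub_pos.mpr ht1)]

lemma F_lt {x y : ℝ} (hx : |x| ≤ 1) (hy : |y| ≤ 1) (hxy : x ^ 2 < y ^ 2) :
    F t y < F t x := by
  obtain ⟨hx1, hx2⟩ := abs_le.mp hx
  obtain ⟨hy1, hy2⟩ := abs_le.mp hy
  have px := hpos ht0 ht1 hx2
  have pnx := hpos ht0 ht1 (show -x ≤ 1 by linarith)
  have py := hpos ht0 ht1 hy2
  have pny := hpos ht0 ht1 (show -y ≤ 1 by linarith)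
  have ex : F t x = Real.log (eulerH t x * eulerH t (-x)) / 2 := by
    rw [F, Real.log_mul px.ne' pnx.ne']
  have ey : F t y = Real.log (eulerH t y * eulerH t (-y)) / 2 := by
    rw [F, Real.log_mul py.ne' pny.ne']
  rw [ex, ey]
  have hlt : eulerH t y * eulerH t (-y) < eulerH t x * eulerH t (-x) := by
    unfold eulerH
    nlinarith [mul_lt_mul_of_pos_left hxy (mul_pos ht0 ht0)]
  have := Real.log_lt_log (mul_pos py pny) hlt
  linarith

omit ht0 ht1 in
lemma contH : Continuous (eulerH t) := by
  unfold eulerH; continuity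

lemma cont_log1 : ContinuousOn (fun x => Real.log (eulerH t x)) (Icc (-1 : ℝ) 1) :=
  ContinuousOn.log (contH (t:=t)).continuousOn fun x hx => (hpos ht0 ht1 hx.2).ne'

lemma cont_log2 : ContinuousOn (fun x => Real.log (eulerH t (-x))) (Icc (-1 : ℝ) 1) :=
  ContinuousOn.log ((contH (t:=t)).comp continuous_neg).continuousOn
    fun x hx => (hpos ht0 ht1 (by linarith [hx.1] : -x ≤ 1)).ne'

lemma cont_F : ContinuousOn (F t) (Icc (-1 : ℝ) 1) := by
  unfold F
  exact ((cont_log1 ht0 ht1).add (cont_log2 ht0 ht1)).div_const 2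

omit ht0 ht1 in
lemma cont_w : Continuous w := by
  unfold w
  exact Real.continuous_sqrt.comp (by continuity)

omit ht0 ht1 in
lemma int_symm (φ : ℝ → ℝ) :
    (∫ x in (-1 : ℝ)..1, φ (-x)) = ∫ x in (-1 : ℝ)..1, φ x := by
  rw [intervalIntegral.integral_comp_neg]
  norm_num

omit ht0 ht1 in
lemma int_F_mul (m : ℝ → ℝ) (hm : ∀ x, m (-x) = m x)
    (hmi : IntervalIntegrable (fun x => Real.log (eulerH t x) * m x) volume (-1) 1)
    (hmi' : IntervalIntegrable (fun x => Real.log (eulerH t (-x)) * m x) volume (-1) 1) :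
    (∫ x in (-1 : ℝ)..1, F t x * m x)
      = ∫ x in (-1 : ℝ)..1, Real.log (eulerH t x) * m x := by
  have h1 : (∫ x in (-1 : ℝ)..1, Real.log (eulerH t (-x)) * m x)
      = ∫ x in (-1 : ℝ)..1, Real.log (eulerH t x) * m x := by
    have h := int_symm (fun x => Real.log (eulerH t x) * m x)
    calc (∫ x in (-1 : ℝ)..1, Real.log (eulerH t (-x)) * m x)
        = ∫ x in (-1 : ℝ)..1, Real.log (eulerH t (-x)) * m (-x) := by simp_rw [hm]
      _ = _ := h
  have key : (∫ x in (-1 : ℝ)..1, F t x * m x)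
      = (∫ x in (-1 : ℝ)..1,
          (Real.log (eulerH t x) * m x + Real.log (eulerH t (-x)) * m x)) / 2 := by
    rw [← intervalIntegral.integral_div]
    apply intervalIntegral.integral_congr
    intro x _
    simp only [F]
    ring
  rw [key, intervalIntegral.integral_add hmi hmi', h1]
  ring

lemma key_neg :
    (∫ x, F t x * (x ^ 2 * w x) ∂(volume.restrict (Ioc (-1 : ℝ) 1)))
        * (∫ x, w x ∂(volume.restrict (Ioc (-1 : ℝ) 1)))
      - (∫ x, F t x * w x ∂(volume.restrict (Ioc (-1 : ℝ) 1)))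
        * (∫ x, x ^ 2 * w x ∂(volume.restrict (Ioc (-1 : ℝ) 1))) < 0 := by
  set ν := volume.restrict (Ioc (-1 : ℝ) 1) with hν
  have hIcc : ∀ φ : ℝ → ℝ, ContinuousOn φ (Icc (-1 : ℝ) 1) → Integrable φ ν := by
    intro φ h
    exact (h.integrableOn_Icc).mono_set Ioc_subset_Icc_self
  have hcF := cont_F ht0 ht1
  have hcw : ContinuousOn w (Icc (-1 : ℝ) 1) := cont_w.continuousOn
  have hcg : ContinuousOn (fun x : ℝ => x ^ 2) (Icc (-1 : ℝ) 1) :=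
    (continuous_pow 2).continuousOn
  have hA : Integrable (fun x => F t x * (x ^ 2 * w x)) ν := hIcc _ (hcF.mul (hcg.mul hcw))
  have hB : Integrable (fun x => F t x * w x) ν := hIcc _ (hcF.mul hcw)
  have hC : Integrable (fun x => x ^ 2 * w x) ν := hIcc _ (hcg.mul hcw)
  have hw : Integrable w ν := hIcc _ hcw
  set H : ℝ × ℝ → ℝ :=
    fun z => (F t z.1 - F t z.2) * (z.1 ^ 2 - z.2 ^ 2) * (w z.1 * w z.2) with hH
  have hHeq : H = fun z => (F t z.1 * (z.1 ^ 2 * w z.1)) * w z.2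
      - (F t z.1 * w z.1) * (z.2 ^ 2 * w z.2)
      - (z.1 ^ 2 * w z.1) * (F t z.2 * w z.2)
      + w z.1 * (F t z.2 * (z.2 ^ 2 * w z.2)) := by
    funext z; simp only [hH]; ring
  have hint : Integrable H (ν.prod ν) := by
    rw [hHeq]
    exact (((hA.mul_prod hw).sub (hB.mul_prod hC)).sub (hC.mul_prod hB)).add (hw.mul_prod hA)
  have i1 : Integrable (fun z : ℝ × ℝ => (F t z.1 * (z.1 ^ 2 * w z.1)) * w z.2) (ν.prod ν) :=
    hA.mul_prod hw
  have i2 : Integrable (fun z : ℝ × ℝ => (F t z.1 * w z.1) * (z.2 ^ 2 * w z.2)) (ν.prod ν) :=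
    hB.mul_prod hC
  have i3 : Integrable (fun z : ℝ × ℝ => (z.1 ^ 2 * w z.1) * (F t z.2 * w z.2)) (ν.prod ν) :=
    hC.mul_prod hB
  have i4 : Integrable (fun z : ℝ × ℝ => w z.1 * (F t z.2 * (z.2 ^ 2 * w z.2))) (ν.prod ν) :=
    hw.mul_prod hA
  have i12 : Integrable (fun z : ℝ × ℝ => (F t z.1 * (z.1 ^ 2 * w z.1)) * w z.2
      - (F t z.1 * w z.1) * (z.2 ^ 2 * w z.2)) (ν.prod ν) := i1.sub i2
  have i123 : Integrable (fun z : ℝ × ℝ => (F t z.1 * (z.1 ^ 2 * w z.1)) * w z.2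
      - (F t z.1 * w z.1) * (z.2 ^ 2 * w z.2)
      - (z.1 ^ 2 * w z.1) * (F t z.2 * w z.2)) (ν.prod ν) := i12.sub i3
  have hval : ∫ z, H z ∂(ν.prod ν)
      = 2 * ((∫ x, F t x * (x ^ 2 * w x) ∂ν) * (∫ x, w x ∂ν)
          - (∫ x, F t x * w x ∂ν) * (∫ x, x ^ 2 * w x ∂ν)) := by
    rw [hHeq, MeasureTheory.integral_add i123 i4, MeasureTheory.integral_sub i12 i3,
      MeasureTheory.integral_sub i1 i2,
      MeasureTheory.integral_prod_mul (μ := ν) (ν := ν) (fun x => F t x * (x ^ 2 * w x)) w,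
      MeasureTheory.integral_prod_mul (μ := ν) (ν := ν) (fun x => F t x * w x)
        (fun x => x ^ 2 * w x),
      MeasureTheory.integral_prod_mul (μ := ν) (ν := ν) (fun x => x ^ 2 * w x)
        (fun x => F t x * w x),
      MeasureTheory.integral_prod_mul (μ := ν) (ν := ν) w
        (fun x => F t x * (x ^ 2 * w x))]
    ring
  have hnonpos : ∀ z : ℝ × ℝ, H z ≤ 0 := by
    rintro ⟨x, y⟩
    simp only [hH]
    rcases le_or_gt 1 |x| with hx | hx
    · rw [w_eq_zero hx, zero_mul, mul_zero]
    rcases le_or_gt 1 |y| with hy | hy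
    · rw [w_eq_zero hy, mul_zero, mul_zero]
    rcases lt_trichotomy (x ^ 2) (y ^ 2) with h | h | h
    · have h1 : 0 < F t x - F t y := sub_pos.mpr (F_lt ht0 ht1 hx.le hy.le h)
      have h2 : x ^ 2 - y ^ 2 < 0 := by linarith
      have h3 : (F t x - F t y) * (x ^ 2 - y ^ 2) ≤ 0 :=
        le_of_lt (mul_neg_of_pos_of_neg h1 h2)
      exact mul_nonpos_of_nonpos_of_nonneg h3 (mul_nonneg (w_nonneg x) (w_nonneg y))
    · simp [h]
    · have h1 : F t x - F t y < 0 := sub_neg.mpr (F_lt ht0 ht1 hy.le hx.le h)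
      have h2 : 0 < x ^ 2 - y ^ 2 := by linarith
      have h3 : (F t x - F t y) * (x ^ 2 - y ^ 2) ≤ 0 :=
        le_of_lt (mul_neg_of_neg_of_pos h1 h2)
      exact mul_nonpos_of_nonpos_of_nonneg h3 (mul_nonneg (w_nonneg x) (w_nonneg y))
  have hsupp : Ioo (0 : ℝ) (1 / 2) ×ˢ Ioo (1 / 2 : ℝ) 1 ⊆
      Function.support (fun z => -H z) := by
    rintro ⟨x, y⟩ ⟨hx, hy⟩
    simp only [Function.mem_support, ne_eq, neg_eq_zero]
    have hx0 : 0 < x := hx.1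
    have hx2 : x < 1 / 2 := hx.2
    have hy1 : 1 / 2 < y := hy.1
    have hy2 : y < 1 := hy.2
    have haxlt : |x| < 1 := by rw [abs_of_pos hx0]; linarith
    have haylt : |y| < 1 := by rw [abs_of_pos (by linarith : (0:ℝ) < y)]; linarith
    have hxy : x ^ 2 < y ^ 2 := by nlinarith
    have h1 : 0 < F t x - F t y := sub_pos.mpr (F_lt ht0 ht1 haxlt.le haylt.le hxy)
    have h2 : x ^ 2 - y ^ 2 < 0 := by linarith
    have hlt : H (x, y) < 0 :=
      mul_neg_of_neg_of_pos (mul_neg_of_pos_of_neg h1 h2)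
        (mul_pos (w_pos haxlt) (w_pos haylt))
    exact hlt.ne
  have hpos2 : 0 < ∫ z, -H z ∂(ν.prod ν) := by
    rw [integral_pos_iff_support_of_nonneg
      (fun z => neg_nonneg.mpr (hnonpos z)) hint.neg]
    refine lt_of_lt_of_le ?_ (measure_mono hsupp)
    rw [Measure.prod_prod, hν, Measure.restrict_apply measurableSet_Ioo,
      Measure.restrict_apply measurableSet_Ioo,
      inter_eq_self_of_subset_left
        (show Ioo (0 : ℝ) (1 / 2) ⊆ Ioc (-1 : ℝ) 1 from
          fun x hx => ⟨by linarith [hx.1], by linarith [hx.2]⟩),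
      inter_eq_self_of_subset_left
        (show Ioo (1 / 2 : ℝ) 1 ⊆ Ioc (-1 : ℝ) 1 from
          fun x hx => ⟨by linarith [hx.1], le_of_lt hx.2⟩),
      Real.volume_Ioo, Real.volume_Ioo]
    apply ENNReal.mul_pos
    · exact (ENNReal.ofReal_pos.mpr (by norm_num)).ne'
    · exact (ENNReal.ofReal_pos.mpr (by norm_num)).ne'
  have hHneg : ∫ z, H z ∂(ν.prod ν) < 0 := by
    rw [MeasureTheory.integral_neg] at hpos2; linarith
  rw [hval] at hHneg
  linarith

end T
end EulerAux

/-- Negativity of the untilted Euler-factor covariance: for every `t ∈ (0,1)`,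
`Cov^t_0(log h_t, x²) < 0` under the untilted semicircle weight. -/
theorem eulerCov_log_xsq_neg_at_zero (t : ℝ) (ht0 : 0 < t) (ht1 : t < 1) :
    eulerCov t 0 (fun x => Real.log (eulerH t x)) (fun x => x ^ 2) < 0 := by
  open EulerAux MeasureTheory Set in
  have hle : (-1 : ℝ) ≤ 1 := by norm_num
  have hcF := EulerAux.cont_F ht0 ht1
  have hcw : ContinuousOn EulerAux.w (Set.Icc (-1 : ℝ) 1) := EulerAux.cont_w.continuousOn
  have hcg : ContinuousOn (fun x : ℝ => x ^ 2) (Set.Icc (-1 : ℝ) 1) :=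
    (continuous_pow 2).continuousOn
  have hcl1 := EulerAux.cont_log1 ht0 ht1
  have hcl2 := EulerAux.cont_log2 ht0 ht1
  have hm1 : ∀ x : ℝ, (fun x => x ^ 2 * EulerAux.w x) (-x) = (fun x => x ^ 2 * EulerAux.w x) x := by
    intro x; simp [EulerAux.w, neg_sq]
  have hm2 : ∀ x : ℝ, EulerAux.w (-x) = EulerAux.w x := by
    intro x; simp [EulerAux.w, neg_sq]
  have hii : ∀ φ : ℝ → ℝ, ContinuousOn φ (Set.Icc (-1 : ℝ) 1) →
      IntervalIntegrable φ MeasureTheory.volume (-1 : ℝ) 1 := by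
    intro φ h
    apply h.intervalIntegrable_of_Icc hle
  -- the three interval integrals rewritten via the even part F
  have eA : (∫ x in (-1 : ℝ)..1, (Real.log (eulerH t x) * x ^ 2) * EulerAux.w x)
      = ∫ x, EulerAux.F t x * (x ^ 2 * EulerAux.w x)
          ∂(MeasureTheory.volume.restrict (Set.Ioc (-1 : ℝ) 1)) := by
    rw [show (fun x => (Real.log (eulerH t x) * x ^ 2) * EulerAux.w x)
        = fun x => Real.log (eulerH t x) * (x ^ 2 * EulerAux.w x) from
      funext fun x => by ring]
    rw [← EulerAux.int_F_mul (fun x => x ^ 2 * EulerAux.w x) hm1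
      (hii _ (hcl1.mul (hcg.mul hcw)))
      (hii _ (hcl2.mul (hcg.mul hcw)))]
    exact intervalIntegral.integral_of_le hle
  have eB : (∫ x in (-1 : ℝ)..1, Real.log (eulerH t x) * EulerAux.w x)
      = ∫ x, EulerAux.F t x * EulerAux.w x
          ∂(MeasureTheory.volume.restrict (Set.Ioc (-1 : ℝ) 1)) := by
    rw [← EulerAux.int_F_mul EulerAux.w hm2 (hii _ (hcl1.mul hcw)) (hii _ (hcl2.mul hcw))]
    exact intervalIntegral.integral_of_le hle
  have eC : (∫ x in (-1 : ℝ)..1, x ^ 2 * EulerAux.w x)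
      = ∫ x, x ^ 2 * EulerAux.w x
          ∂(MeasureTheory.volume.restrict (Set.Ioc (-1 : ℝ) 1)) :=
    intervalIntegral.integral_of_le hle
  have eZ : eulerZ t 0
      = ∫ x, EulerAux.w x ∂(MeasureTheory.volume.restrict (Set.Ioc (-1 : ℝ) 1)) := by
    unfold eulerZ
    simp_rw [EulerAux.eulerW_zero]
    exact intervalIntegral.integral_of_le hle
  have hZval : eulerZ t 0 = Real.pi / 2 := by
    unfold eulerZ
    simp_rw [EulerAux.eulerW_zero, EulerAux.w]
    exact integral_sqrt_one_sub_sq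
  have hZpos : 0 < eulerZ t 0 := by
    rw [hZval]; positivity
  have key := EulerAux.key_neg ht0 ht1
  -- assemble
  unfold eulerCov eulerE
  simp only [EulerAux.eulerW_zero]
  rw [eA, eB, eC]
  set a := ∫ x, EulerAux.F t x * (x ^ 2 * EulerAux.w x)
      ∂(MeasureTheory.volume.restrict (Set.Ioc (-1 : ℝ) 1)) with ha
  set b := ∫ x, EulerAux.F t x * EulerAux.w x
      ∂(MeasureTheory.volume.restrict (Set.Ioc (-1 : ℝ) 1)) with hb
  set c := ∫ x, x ^ 2 * EulerAux.w x
      ∂(MeasureTheory.volume.restrict (Set.Ioc (-1 : ℝ) 1)) with hc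
  have hzz : (∫ x, EulerAux.w x ∂(MeasureTheory.volume.restrict (Set.Ioc (-1 : ℝ) 1)))
      = eulerZ t 0 := eZ.symm
  rw [hzz] at key
  have hid : (eulerZ t 0)⁻¹ * a - (eulerZ t 0)⁻¹ * b * ((eulerZ t 0)⁻¹ * c)
      = ((eulerZ t 0)⁻¹) ^ 2 * (a * eulerZ t 0 - b * c) := by
    field_simp
  rw [hid]
  exact mul_neg_of_pos_of_neg (by positivity) (by linarith)
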